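/- arXiv:0902.3265 — 2 statements merged into one kernel-verified Lean document; each statement's English description precedes it below -/
import Mathlib

section
/- Let G be a graph admitting a k-queue layout (with k ≥ 1). Let F be a subgraph of G each of whose connected components has radius at most r, and let H be the simple graph obtained from G by contracting each connected component of F into a single vertex (deleting any resulting loops and parallel edges). Then H admits an f_r(k)-queue layout, where f_r(k) = 2k·( ((2k)^{r+1} − 1)/(2k − 1) )². -/
open SimpleGraph MeasureTheory Filter

/-! ### Subdivisions -/

/-- A witness that the graph `H` is a subdivision of the graph `G`:  `H` is obtained from `G`
by replacing each edge `ab` of `G` by a path between (the copies of) `a` and `b` whose internal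
(division) vertices are new and pairwise distinct. -/
structure SubdivisionWitness {V : Type*} {W : Type*} (G : SimpleGraph V) (H : SimpleGraph W) where
  emb : V ↪ W
  path : ∀ ⦃a b : V⦄, G.Adj a b → H.Walk (emb a) (emb b)
  path_isPath : ∀ ⦃a b : V⦄ (h : G.Adj a b), (path h).IsPath
  path_symm : ∀ ⦃a b : V⦄ (h : G.Adj a b), path h.symm = (path h).reverse
  internal_new : ∀ ⦃a b : V⦄ (h : G.Adj a b) (x : V),
    emb x ∈ (path h).support → x = a ∨ x = b
  internally_disjoint : ∀ ⦃a b a' b' : V⦄ (h : G.Adj a b) (h' : G.Adj a' b'),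
    s(a, b) ≠ s(a', b') → ∀ w : W, w ∈ (path h).support → w ∈ (path h').support →
      ∃ x : V, emb x = w
  vert_cover : ∀ w : W,
    (∃ x : V, emb x = w) ∨ ∃ (a b : V) (h : G.Adj a b), w ∈ (path h).support
  edge_cover : ∀ e ∈ H.edgeSet, ∃ (a b : V) (h : G.Adj a b), e ∈ (path h).edges

/-- `H` is a subdivision of `G`. -/
def IsSubdivision {V W : Type*} (G : SimpleGraph V) (H : SimpleGraph W) : Prop :=
  Nonempty (SubdivisionWitness G H)

/-- `H` is a `(≤ t)`-subdivision of `G`: a subdivision with at most `t` division vertices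
per edge (i.e. each replacing path has length at most `t + 1`). -/
def IsLESubdivision {V W : Type*} (t : ℕ) (G : SimpleGraph V) (H : SimpleGraph W) : Prop :=
  ∃ S : SubdivisionWitness G H, ∀ ⦃a b : V⦄ (h : G.Adj a b), (S.path h).length ≤ t + 1

/-- `H` is the `t`-subdivision of `G`: exactly `t` division vertices on each edge. -/
def IsExactSubdivision {V W : Type*} (t : ℕ) (G : SimpleGraph V) (H : SimpleGraph W) : Prop :=
  ∃ S : SubdivisionWitness G H, ∀ ⦃a b : V⦄ (h : G.Adj a b), (S.path h).length = t + 1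

/-! ### Shallow topological minors and the top-grad -/

/-- `H` is a shallow topological minor of `G` at depth `d`:  some `(≤ 2d)`-subdivision of `H`
is isomorphic to a subgraph of `G`. -/
def IsShallowTopMinor {W V : Type*} (d : ℕ) (H : SimpleGraph W) (G : SimpleGraph V) : Prop :=
  ∃ (m : ℕ) (S : SimpleGraph (Fin m)),
    IsLESubdivision (2 * d) H S ∧ ∃ f : S →g G, Function.Injective f

/-- The topological greatest reduced average density (top-grad) `∇̃_d(G)` of rank `d`:
the maximum of `‖H‖/|H|` over all shallow topological minors `H` of `G` at depth `d`
with at least one vertex. -/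
noncomputable def topGrad {V : Type*} (d : ℕ) (G : SimpleGraph V) : ℝ :=
  sSup {q : ℝ | ∃ (m : ℕ) (H : SimpleGraph (Fin m)), 0 < m ∧
    IsShallowTopMinor d H G ∧ q = (Nat.card H.edgeSet : ℝ) / m}

/-! ### Shallow minors, the grad, and bounded expansion -/

/-- `H` is a shallow minor of `G` at depth `d`: it is obtained from `G` by contracting
pairwise disjoint connected subgraphs (branch sets) of radius at most `d` and taking
a simple subgraph of the result. -/
def IsShallowMinor {W V : Type*} (d : ℕ) (H : SimpleGraph W) (G : SimpleGraph V) : Prop :=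
  ∃ B : W → Set V,
    (∀ i, (B i).Nonempty) ∧
    (∀ i j, i ≠ j → Disjoint (B i) (B j)) ∧
    (∀ i : W, ∃ c : (B i), ∀ v : (B i), ∃ p : (G.induce (B i)).Walk c v, p.length ≤ d) ∧
    (∀ i j : W, H.Adj i j → ∃ u ∈ B i, ∃ v ∈ B j, G.Adj u v)

/-- The greatest reduced average density (grad) `∇_d(G)` of rank `d`. -/
noncomputable def grad {V : Type*} (d : ℕ) (G : SimpleGraph V) : ℝ :=
  sSup {q : ℝ | ∃ (m : ℕ) (H : SimpleGraph (Fin m)), 0 < m ∧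
    IsShallowMinor d H G ∧ q = (Nat.card H.edgeSet : ℝ) / m}

/-- A class of finite simple graphs, represented by graphs on `Fin n` for all `n`. -/
abbrev GraphClass := Set ((n : ℕ) × SimpleGraph (Fin n))

/-- A class of graphs has bounded expansion if `∇_d` is bounded on the class by a
function of `d`. -/
def BoundedExpansion (C : GraphClass) : Prop :=
  ∃ f : ℕ → ℝ, ∀ G ∈ C, ∀ d : ℕ, grad d G.2 ≤ f d

/-! ### Graph parameters -/

/-- A graph parameter is isomorphism-invariant. -/
def IsoInvariant (α : ((n : ℕ) × SimpleGraph (Fin n)) → ℝ) : Prop :=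
  ∀ G H : (n : ℕ) × SimpleGraph (Fin n), Nonempty (G.2 ≃g H.2) → α G = α H

/-- A graph parameter is strongly topological: `α(G)` and `α(H)` bound each other through a
fixed non-decreasing function, whenever `H` is a `(≤1)`-subdivision of `G`. -/
def StronglyTopological (α : ((n : ℕ) × SimpleGraph (Fin n)) → ℝ) : Prop :=
  ∃ f : ℝ → ℝ, Monotone f ∧ ∀ G H : (n : ℕ) × SimpleGraph (Fin n),
    IsLESubdivision 1 G.2 H.2 → α G ≤ f (α H) ∧ α H ≤ f (α G)

/-- A graph parameter is monotone: it does not increase when passing to a subgraph. -/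
def MonotoneParam (α : ((n : ℕ) × SimpleGraph (Fin n)) → ℝ) : Prop :=
  ∀ G H : (n : ℕ) × SimpleGraph (Fin n),
    (∃ f : H.2 →g G.2, Function.Injective f) → α H ≤ α G

/-- A graph parameter is degree-bound: every nonempty graph has a vertex of degree at most
`f(α(G))` for some fixed function `f`. -/
def DegreeBound (α : ((n : ℕ) × SimpleGraph (Fin n)) → ℝ) : Prop :=
  ∃ f : ℝ → ℝ, ∀ G : (n : ℕ) × SimpleGraph (Fin n), 0 < G.1 →
    ∃ v : Fin G.1, (Nat.card (G.2.neighborSet v) : ℝ) ≤ f (α G)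

/-! ### Queue and stack layouts -/

/-- A `k`-queue layout of `G` with respect to the linear order on `V`: an assignment of the
(potential) edges to `k` queues so that no two edges in a common queue are nested. -/
def IsQueueLayout {V : Type*} [LinearOrder V] (G : SimpleGraph V) (k : ℕ)
    (q : Sym2 V → Fin k) : Prop :=
  ∀ ⦃a b c d : V⦄, G.Adj a b → G.Adj c d → a < b → c < d →
    q s(a, b) = q s(c, d) → ¬(a < c ∧ d < b)

/-- The signed queue function `Q`:  `Q(v,w) = q(vw)` if `v < w` and `Q(v,w) = -q(vw)`
if `w < v` (queues are numbered `1,…,k`). -/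
def signedQueue {V : Type*} [LinearOrder V] {k : ℕ} (q : Sym2 V → Fin k) (v w : V) : ℤ :=
  if v < w then ((q s(v, w) : ℕ) : ℤ) + 1 else -(((q s(v, w) : ℕ) : ℤ) + 1)

/-- `G` admits a `k`-queue layout (for some vertex ordering). -/
def HasQueueLayout {V : Type*} (G : SimpleGraph V) (k : ℕ) : Prop :=
  ∃ (ord : LinearOrder V) (q : Sym2 V → Fin k), @IsQueueLayout V ord G k q

/-- A `k`-stack layout of `G` with respect to the linear order on `V`: an assignment of the
(potential) edges to `k` stacks so that no two edges in a common stack cross. -/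
def IsStackLayout {V : Type*} [LinearOrder V] (G : SimpleGraph V) (k : ℕ)
    (q : Sym2 V → Fin k) : Prop :=
  ∀ ⦃a b c d : V⦄, G.Adj a b → G.Adj c d → a < b → c < d →
    q s(a, b) = q s(c, d) → ¬(a < c ∧ c < b ∧ b < d)

/-- `G` admits a `k`-stack layout (for some vertex ordering). -/
def HasStackLayout {V : Type*} (G : SimpleGraph V) (k : ℕ) : Prop :=
  ∃ (ord : LinearOrder V) (q : Sym2 V → Fin k), @IsStackLayout V ord G k q

/-! ### Contracting the components of a subgraph -/

/-- The equivalence relation on `V(G)` identifying the vertices in a common connected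
component of the subgraph `F`. -/
def contractSetoid {V : Type*} {G : SimpleGraph V} (F : G.Subgraph) : Setoid V where
  r u v := u = v ∨ ∃ (hu : u ∈ F.verts) (hv : v ∈ F.verts),
    F.coe.Reachable ⟨u, hu⟩ ⟨v, hv⟩
  iseqv := by
    refine ⟨fun x => Or.inl rfl, ?_, ?_⟩
    · rintro x y (rfl | ⟨hx, hy, h⟩)
      · exact Or.inl rfl
      · exact Or.inr ⟨hy, hx, h.symm⟩
    · rintro x y z (rfl | ⟨hx, hy, h⟩) hyz
      · exact hyz
      · rcases hyz with (rfl | ⟨hy', hz, h'⟩)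
        · exact Or.inr ⟨hx, hy, h⟩
        · exact Or.inr ⟨hx, hz, h.trans h'⟩

/-- The simple graph obtained from `G` by contracting each connected component of the
subgraph `F` to a single vertex (deleting loops and parallel edges). -/
def contractGraph {V : Type*} {G : SimpleGraph V} (F : G.Subgraph) :
    SimpleGraph (Quotient (contractSetoid F)) where
  Adj A B := A ≠ B ∧ ∃ u v : V, G.Adj u v ∧
    Quotient.mk (contractSetoid F) u = A ∧ Quotient.mk (contractSetoid F) v = B
  symm := by
    refine ⟨?_⟩
    rintro A B ⟨hne, u, v, h, hu, hv⟩
    exact ⟨hne.symm, v, u, h.symm, hv, hu⟩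
  loopless := by
    refine ⟨?_⟩
    rintro A ⟨hne, -⟩
    exact hne rfl

/-! ### Non-repetitive and acyclic colourings -/

/-- A colouring `f` of `G` is non-repetitive if there is no path `v₀, …, v_{2s-1}` in `G`
(`s ≥ 1`, vertices pairwise distinct, consecutive vertices adjacent) with
`f(v_i) = f(v_{i+s})` for all `i < s`. -/
def NonRepColoring {V α : Type*} (G : SimpleGraph V) (f : V → α) : Prop :=
  ∀ s : ℕ, 0 < s → ∀ v : ℕ → V,
    (∀ i, i < 2 * s → ∀ j, j < 2 * s → i ≠ j → v i ≠ v j) →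
    (∀ i, i + 1 < 2 * s → G.Adj (v i) (v (i + 1))) →
    ¬(∀ i, i < s → f (v i) = f (v (i + s)))

/-- `π(G)`: the minimum number of colours in a non-repetitive colouring of `G`. -/
noncomputable def piNum {V : Type*} (G : SimpleGraph V) : ℕ :=
  sInf {k : ℕ | ∃ f : V → Fin k, NonRepColoring G f}

/-- A proper colouring of `G` with no bichromatic cycle (every cycle receives at least
three colours). -/
def AcyclicColoring {V α : Type*} (G : SimpleGraph V) (f : V → α) : Prop :=
  (∀ u w : V, G.Adj u w → f u ≠ f w) ∧
  ∀ (u : V) (c : G.Walk u u), c.IsCycle →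
    ∃ x ∈ c.support, ∃ y ∈ c.support, ∃ z ∈ c.support, f x ≠ f y ∧ f x ≠ f z ∧ f y ≠ f z

/-- `χₐ(G)`: the acyclic chromatic number of `G`. -/
noncomputable def chiA {V : Type*} (G : SimpleGraph V) : ℕ :=
  sInf {k : ℕ | ∃ f : V → Fin k, AcyclicColoring G f}

/-! ### The Erdős–Rényi random graph `G(n, p)` -/

/-- The Erdős–Rényi measure: each potential edge (coordinate) is present independently with
probability `p` (truncated to `[0,1]`). -/
noncomputable def erdosRenyi (n : ℕ) (p : ℝ) : Measure (Sym2 (Fin n) → Bool) :=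
  Measure.pi fun _ =>
    ((PMF.bernoulli (min (Real.toNNReal p) 1) (min_le_right _ _)).toMeasure)

/-- The simple graph on `Fin n` determined by an outcome `ω` of the edge indicators. -/
def graphOf {n : ℕ} (ω : Sym2 (Fin n) → Bool) : SimpleGraph (Fin n) where
  Adj u v := u ≠ v ∧ ω s(u, v) = true
  symm := by
    refine ⟨?_⟩
    rintro u v ⟨hne, h⟩
    exact ⟨hne.symm, by rwa [Sym2.eq_swap]⟩
  loopless := by
    refine ⟨?_⟩
    rintro u ⟨hne, -⟩
    exact hne rfl


/-! ### Auxiliary machinery for Statement 9 -/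

/-- digit encoding of a signed queue value -/
def digQ (k : ℕ) (z : ℤ) : ℕ := if 0 < z then z.toNat - 1 else k + ((-z).toNat - 1)

def encL (k : ℕ) : List ℕ → ℕ
  | [] => 0
  | d :: t => 1 + d + 2 * k * encL k t

def geomT (k : ℕ) : ℕ → ℕ
  | 0 => 0
  | m + 1 => 1 + 2 * k * geomT k m

lemma digQ_pos (k m : ℕ) : digQ k ((m : ℤ) + 1) = m := by
  unfold digQ; rw [if_pos (by omega)]; omega

lemma digQ_neg (k m : ℕ) : digQ k (-((m : ℤ) + 1)) = k + m := by
  unfold digQ; rw [if_neg (by omega)]; omega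

lemma signedQueue_form {V : Type*} [LinearOrder V] {k : ℕ} (q : Sym2 V → Fin k) (a b : V) :
    ∃ m : ℕ, m < k ∧ (signedQueue q a b = (m : ℤ) + 1 ∨ signedQueue q a b = -((m : ℤ) + 1)) := by
  refine ⟨(q s(a, b) : ℕ), (q s(a, b)).isLt, ?_⟩
  unfold signedQueue; split
  · exact Or.inl rfl
  · exact Or.inr rfl

lemma digQ_signedQueue_lt {V : Type*} [LinearOrder V] {k : ℕ} (q : Sym2 V → Fin k) (a b : V) :
    digQ k (signedQueue q a b) < 2 * k := by
  obtain ⟨m, hm, h | h⟩ := signedQueue_form q a b <;> rw [h]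
  · rw [digQ_pos]; omega
  · rw [digQ_neg]; omega

lemma digQ_inj {k : ℕ} {z z' : ℤ}
    (hz : ∃ m : ℕ, m < k ∧ (z = (m : ℤ) + 1 ∨ z = -((m : ℤ) + 1)))
    (hz' : ∃ m : ℕ, m < k ∧ (z' = (m : ℤ) + 1 ∨ z' = -((m : ℤ) + 1)))
    (h : digQ k z = digQ k z') : z = z' := by
  obtain ⟨m, hm, hc⟩ := hz
  obtain ⟨m', hm', hc'⟩ := hz'
  rcases hc with rfl | rfl <;> rcases hc' with rfl | rfl <;>
    simp only [digQ_pos, digQ_neg] at h <;> omega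

lemma encL_lt {k : ℕ} (hk : 1 ≤ k) :
    ∀ l : List ℕ, (∀ d ∈ l, d < 2 * k) → encL k l < geomT k (l.length + 1) := by
  intro l
  induction l with
  | nil => intro _; simp [encL, geomT]
  | cons d t ih =>
    intro hd
    have h1 : encL k t + 1 ≤ geomT k (t.length + 1) := ih (fun x hx => hd x (List.mem_cons_of_mem _ hx))
    have h2 : 2 * k * (encL k t + 1) ≤ 2 * k * geomT k (t.length + 1) :=
      Nat.mul_le_mul_left _ h1
    rw [Nat.mul_succ] at h2
    have h3 : d < 2 * k := hd d List.mem_cons_self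
    have hub : encL k (d :: t) = 1 + d + 2 * k * encL k t := rfl
    have hgt : geomT k (t.length + 1 + 1) = 1 + 2 * k * geomT k (t.length + 1) := rfl
    rw [List.length_cons, hub, hgt]
    omega

lemma geomT_succ_le {k : ℕ} : ∀ m : ℕ, geomT k m ≤ geomT k (m + 1) := by
  intro m
  induction m with
  | zero => simp [geomT]
  | succ m ih =>
    simp only [geomT]
    exact Nat.add_le_add_left (Nat.mul_le_mul_left _ ih) _

lemma geomT_mono {k : ℕ} : Monotone (geomT k) :=
  monotone_nat_of_le_succ geomT_succ_le

lemma geomT_pos {k : ℕ} (m : ℕ) : 0 < geomT k (m + 1) := by simp [geomT]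

lemma encL_inj {k : ℕ} (hk : 1 ≤ k) :
    ∀ l l' : List ℕ, (∀ d ∈ l, d < 2 * k) → (∀ d ∈ l', d < 2 * k) →
      encL k l = encL k l' → l = l' := by
  intro l
  induction l with
  | nil =>
    intro l' _ _ h
    cases l' with
    | nil => rfl
    | cons d t => simp [encL] at h; omega
  | cons d t ih =>
    intro l' hd hd' h
    cases l' with
    | nil => simp [encL] at h
    | cons d' t' =>
      simp only [encL] at h
      have hdlt : d < 2 * k := hd d List.mem_cons_self
      have hdlt' : d' < 2 * k := hd' d' List.mem_cons_self
      have h0 : d + 2 * k * encL k t = d' + 2 * k * encL k t' := by omega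
      have hm := congrArg (· % (2 * k)) h0
      simp only [Nat.add_mul_mod_self_left] at hm
      have hdd : d = d' := by
        rwa [Nat.mod_eq_of_lt hdlt, Nat.mod_eq_of_lt hdlt'] at hm
      subst hdd
      have h2 : 2 * k * encL k t = 2 * k * encL k t' := by omega
      have h3 : encL k t = encL k t' := Nat.eq_of_mul_eq_mul_left (by omega) h2
      rw [ih t' (fun x hx => hd x (List.mem_cons_of_mem _ hx))
        (fun x hx => hd' x (List.mem_cons_of_mem _ hx)) h3]

lemma geomT_mul {k : ℕ} (hk : 1 ≤ k) :
    ∀ m : ℕ, (2 * k - 1) * geomT k (m + 1) + 1 = (2 * k) ^ (m + 1) := by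
  intro m
  induction m with
  | zero => simp [geomT]; omega
  | succ m ih =>
    have hgt : geomT k (m + 1 + 1) = 1 + 2 * k * geomT k (m + 1) := rfl
    rw [hgt, pow_succ]
    calc (2 * k - 1) * (1 + 2 * k * geomT k (m + 1)) + 1
        = (2 * k) * ((2 * k - 1) * geomT k (m + 1) + 1) := by ring_nf; omega
      _ = (2 * k) ^ (m + 1) * (2 * k) := by rw [ih]; ring

lemma geomT_eq_div {k : ℕ} (hk : 1 ≤ k) (r : ℕ) :
    ((2 * k) ^ (r + 1) - 1) / (2 * k - 1) = geomT k (r + 1) := by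
  have h := geomT_mul hk r
  have h1 : (2 * k) ^ (r + 1) - 1 = (2 * k - 1) * geomT k (r + 1) := by omega
  rw [h1, Nat.mul_div_cancel_left _ (by omega : 0 < 2 * k - 1)]

lemma decode3 {k N qd e1 e2 qd' e1' e2' : ℕ} (hk : 0 < k) (hN : 0 < N)
    (h1 : qd < 2 * k) (h2 : e1 < N) (h1' : qd' < 2 * k) (h2' : e1' < N)
    (h : qd + 2 * k * (e1 + N * e2) = qd' + 2 * k * (e1' + N * e2')) :
    qd = qd' ∧ e1 = e1' ∧ e2 = e2' := by
  have hm := congrArg (· % (2 * k)) h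
  simp only [Nat.add_mul_mod_self_left] at hm
  have hqd : qd = qd' := by rwa [Nat.mod_eq_of_lt h1, Nat.mod_eq_of_lt h1'] at hm
  have hdv := congrArg (· / (2 * k)) h
  simp only [Nat.add_mul_div_left _ _ (by omega : 0 < 2 * k)] at hdv
  rw [Nat.div_eq_of_lt h1, Nat.div_eq_of_lt h1'] at hdv
  simp only [Nat.zero_add] at hdv
  have hm2 := congrArg (· % N) hdv
  simp only [Nat.add_mul_mod_self_left] at hm2
  have he1 : e1 = e1' := by rwa [Nat.mod_eq_of_lt h2, Nat.mod_eq_of_lt h2'] at hm2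
  have hdv2 := congrArg (· / N) hdv
  simp only [Nat.add_mul_div_left _ _ hN] at hdv2
  rw [Nat.div_eq_of_lt h2, Nat.div_eq_of_lt h2'] at hdv2
  simp only [Nat.zero_add] at hdv2
  exact ⟨hqd, he1, hdv2⟩

lemma encode3_lt {k N qd e1 e2 : ℕ} (hk : 0 < k) (h1 : qd < 2 * k) (h2 : e1 < N) (h3 : e2 < N) :
    qd + 2 * k * (e1 + N * e2) < 2 * k * N ^ 2 := by
  have hNe : e1 + N * e2 + 1 ≤ N * N := by
    have h4 : N * e2 + N ≤ N * N := by
      have h5 := Nat.mul_le_mul_left N (by omega : e2 + 1 ≤ N)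
      rw [Nat.mul_succ] at h5; omega
    omega
  have h6 := Nat.mul_le_mul_left (2 * k) hNe
  rw [Nat.mul_succ] at h6
  have hsq : N ^ 2 = N * N := sq N
  rw [hsq]
  omega

lemma list_map_inj_on {α β : Type*} :
    ∀ (l : List α) (f g : α → β), l.map f = l.map g → ∀ a ∈ l, f a = g a := by
  intro l f g h a ha
  induction l with
  | nil => cases ha
  | cons b t ih =>
    simp only [List.map_cons, List.cons.injEq] at h
    rcases List.mem_cons.mp ha with rfl | ha'
    · exact h.1
    · exact ih h.2 ha'

section orderAux
variable {V : Type*} [LinearOrder V] {G : SimpleGraph V} {k : ℕ} {q : Sym2 V → Fin k}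

lemma step_lemma (hq : IsQueueLayout G k q) {a b c d : V} (hab : G.Adj a b) (hcd : G.Adj c d)
    (hac : a < c) (hs : signedQueue q a b = signedQueue q c d) : b ≤ d := by
  unfold signedQueue at hs
  by_cases h1 : a < b <;> by_cases h2 : c < d <;>
    simp only [h1, h2, if_true, if_false] at hs
  · have hv : (q s(a, b) : ℕ) = (q s(c, d) : ℕ) := by omega
    have hnot := hq hab hcd h1 h2 (Fin.ext hv)
    by_contra hbd
    push_neg at hbd
    exact hnot ⟨hac, hbd⟩
  · omega
  · omega
  · have hv : (q s(a, b) : ℕ) = (q s(c, d) : ℕ) := by omega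
    have hba : b < a := (not_lt.mp h1).lt_of_ne hab.ne'
    have hdc : d < c := (not_lt.mp h2).lt_of_ne hcd.ne'
    have hqe : q s(d, c) = q s(b, a) := by
      rw [Sym2.eq_swap, @Sym2.eq_swap _ b a]
      exact (Fin.ext hv).symm
    have hnot := hq hcd.symm hab.symm hdc hba hqe
    by_contra hbd
    push_neg at hbd
    exact hnot ⟨hbd, hac⟩

lemma chain_lemma (hq : IsQueueLayout G k q) (n : ℕ) (p p' : ℕ → V)
    (ha : ∀ i, i < n → G.Adj (p i) (p (i + 1))) (ha' : ∀ i, i < n → G.Adj (p' i) (p' (i + 1)))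
    (hne : ∀ i, i ≤ n → p i ≠ p' i)
    (hs : ∀ i, i < n → signedQueue q (p i) (p (i + 1)) = signedQueue q (p' i) (p' (i + 1)))
    (h0 : p 0 < p' 0) : p n < p' n := by
  induction n with
  | zero => exact h0
  | succ m ih =>
    have hm : p m < p' m :=
      ih (fun i hi => ha i (by omega)) (fun i hi => ha' i (by omega))
        (fun i hi => hne i (by omega)) (fun i hi => hs i (by omega))
    have hle : p (m + 1) ≤ p' (m + 1) :=
      step_lemma hq (ha m (by omega)) (ha' m (by omega)) hm (hs m (by omega))
    exact hle.lt_of_ne (hne (m + 1) le_rfl)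

end orderAux

open Classical in
/-- the chosen edge between two contracted classes -/
noncomputable def selp {V : Type*} {G : SimpleGraph V} (F : G.Subgraph)
    (A B : Quotient (contractSetoid F)) : V × V :=
  if h : ∃ uv : V × V, G.Adj uv.1 uv.2 ∧ Quotient.mk (contractSetoid F) uv.1 = A ∧
      Quotient.mk (contractSetoid F) uv.2 = B then h.choose else (A.out, A.out)

lemma selp_spec {V : Type*} {G : SimpleGraph V} (F : G.Subgraph)
    {A B : Quotient (contractSetoid F)} (h : (contractGraph F).Adj A B) :
    G.Adj (selp F A B).1 (selp F A B).2 ∧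
      Quotient.mk (contractSetoid F) (selp F A B).1 = A ∧
      Quotient.mk (contractSetoid F) (selp F A B).2 = B := by
  obtain ⟨-, u, v, huv, hu, hv⟩ := h
  have hex : ∃ uv : V × V, G.Adj uv.1 uv.2 ∧ Quotient.mk (contractSetoid F) uv.1 = A ∧
      Quotient.mk (contractSetoid F) uv.2 = B := ⟨(u, v), huv, hu, hv⟩
  rw [selp, dif_pos hex]
  exact hex.choose_spec

/-- digit list of the path from the centre to `x` -/
def sigl {V : Type*} [LinearOrder V] {k : ℕ} (q : Sym2 V → Fin k) (n : V → ℕ)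
    (pa : V → ℕ → V) (x : V) : List ℕ :=
  (List.range (n x)).map fun i => digQ k (signedQueue q (pa x i) (pa x (i + 1)))

lemma sigl_mem_lt {V : Type*} [LinearOrder V] {k : ℕ} (q : Sym2 V → Fin k) (n : V → ℕ)
    (pa : V → ℕ → V) (x : V) : ∀ d ∈ sigl q n pa x, d < 2 * k := by
  intro d hd
  simp only [sigl, List.mem_map] at hd
  obtain ⟨i, -, rfl⟩ := hd
  exact digQ_signedQueue_lt q _ _

lemma sigl_length {V : Type*} [LinearOrder V] {k : ℕ} (q : Sym2 V → Fin k) (n : V → ℕ)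
    (pa : V → ℕ → V) (x : V) : (sigl q n pa x).length = n x := by
  simp [sigl]
/-- If `G` admits a `k`-queue layout (`k ≥ 1`), `F` is a subgraph of `G`
each of whose connected components has radius at most `r`, and `H` is obtained from `G` by
contracting each component of `F` to a single vertex, then `H` admits an `f_r(k)`-queue
layout, where `f_r(k) = 2k·(((2k)^{r+1} − 1)/(2k − 1))²`. -/
theorem stmt_9 {V : Type*} [Fintype V] (G : SimpleGraph V) (k r : ℕ) (hk : 1 ≤ k)
    (hG : HasQueueLayout G k) (F : G.Subgraph)
    (hrad : ∀ u : F.verts, ∃ c : F.verts, ∀ x : F.verts,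
      F.coe.Reachable u x → ∃ p : F.coe.Walk c x, p.length ≤ r) :
    HasQueueLayout (contractGraph F)
      (2 * k * (((2 * k) ^ (r + 1) - 1) / (2 * k - 1)) ^ 2) := by
  classical
  obtain ⟨ordV, q, hq⟩ := hG
  -- every class has a centre at distance ≤ r from every member, within the class
  have hcen : ∀ A : Quotient (contractSetoid F), ∃ c : V,
      Quotient.mk (contractSetoid F) c = A ∧
      ∀ x : V, Quotient.mk (contractSetoid F) x = A → ∃ m, m ≤ r ∧ ∃ p : ℕ → V,
        p 0 = c ∧ p m = x ∧ (∀ i, i < m → G.Adj (p i) (p (i + 1))) ∧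
        (∀ i, i ≤ m → Quotient.mk (contractSetoid F) (p i) = A) := by
    intro A
    induction A using Quotient.ind with
    | _ v =>
      by_cases hv : v ∈ F.verts
      · obtain ⟨c, hc⟩ := hrad ⟨v, hv⟩
        have hcv : Quotient.mk (contractSetoid F) (c : V) = Quotient.mk (contractSetoid F) v := by
          obtain ⟨w, -⟩ := hc ⟨v, hv⟩ (SimpleGraph.Reachable.refl _)
          exact Quotient.sound (Or.inr ⟨c.2, hv, ⟨w⟩⟩)
        refine ⟨(c : V), hcv, ?_⟩
        intro x hx
        have hW : ∃ (hx' : x ∈ F.verts) (w : F.coe.Walk c ⟨x, hx'⟩), w.length ≤ r := by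
          rcases Quotient.exact hx with rfl | ⟨hx1, hv1, hreach⟩
          · obtain ⟨w, hw⟩ := hc ⟨x, hv⟩ (SimpleGraph.Reachable.refl _)
            exact ⟨hv, w, hw⟩
          · obtain ⟨w, hw⟩ := hc ⟨x, hx1⟩ hreach.symm
            exact ⟨hx1, w, hw⟩
        obtain ⟨hx', w, hwlen⟩ := hW
        refine ⟨w.length, hwlen, fun i => ((w.getVert i : F.verts) : V), ?_, ?_, ?_, ?_⟩
        · show ((w.getVert 0 : F.verts) : V) = (c : V)
          rw [SimpleGraph.Walk.getVert_zero]
        · show ((w.getVert w.length : F.verts) : V) = x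
          rw [SimpleGraph.Walk.getVert_length]
        · intro i hi
          have hadj := w.adj_getVert_succ hi
          rw [SimpleGraph.Subgraph.coe_adj] at hadj
          exact F.adj_sub hadj
        · intro i hi
          induction i with
          | zero =>
            show Quotient.mk (contractSetoid F) ((w.getVert 0 : F.verts) : V) = _
            rw [SimpleGraph.Walk.getVert_zero]; exact hcv
          | succ j ihj =>
            have hj : j < w.length := by omega
            have hadjj := w.adj_getVert_succ hj
            have hadjj' : F.Adj ((w.getVert j : F.verts) : V) ((w.getVert (j + 1) : F.verts) : V) := by
              rwa [SimpleGraph.Subgraph.coe_adj] at hadjj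
            have hrel : Quotient.mk (contractSetoid F) ((w.getVert j : F.verts) : V) =
                Quotient.mk (contractSetoid F) ((w.getVert (j + 1) : F.verts) : V) := by
              refine Quotient.sound (Or.inr ⟨(w.getVert j).2, (w.getVert (j + 1)).2, ?_⟩)
              exact hadjj.reachable
            show Quotient.mk (contractSetoid F) ((w.getVert (j + 1) : F.verts) : V) = _
            rw [← hrel]
            exact ihj (by omega)
      · refine ⟨v, rfl, ?_⟩
        intro x hx
        rcases Quotient.exact hx with heq | ⟨hx1, hv1, -⟩
        · exact ⟨0, Nat.zero_le r, fun _ => v, rfl, heq.symm,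
            fun i hi => absurd hi (Nat.not_lt_zero i), fun i _ => rfl⟩
        · exact absurd hv1 hv
  choose center hcmk hcpath using hcen
  have hpx : ∀ x : V, ∃ m, m ≤ r ∧ ∃ p : ℕ → V,
      p 0 = center (Quotient.mk (contractSetoid F) x) ∧ p m = x ∧
      (∀ i, i < m → G.Adj (p i) (p (i + 1))) ∧
      (∀ i, i ≤ m → Quotient.mk (contractSetoid F) (p i) = Quotient.mk (contractSetoid F) x) :=
    fun x => hcpath _ x rfl
  choose n hnr pa hp0 hpn hadj hcls using hpx
  have hcinj : Function.Injective center := fun A B h => by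
    rw [← hcmk A, ← hcmk B, h]
  letI : LinearOrder (Quotient (contractSetoid F)) := LinearOrder.lift' center hcinj
  letI : Preorder (Quotient (contractSetoid F)) := (LinearOrder.lift' center hcinj).toPreorder
  have hltc : ∀ A B : Quotient (contractSetoid F), A < B ↔ center A < center B :=
    fun A B => Iff.rfl
  have hNpos : 0 < geomT k (r + 1) := geomT_pos r
  have hKobj : 2 * k * (((2 * k) ^ (r + 1) - 1) / (2 * k - 1)) ^ 2 =
      2 * k * geomT k (r + 1) ^ 2 := by
    rw [geomT_eq_div hk r]
  rw [hKobj]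
  have hKpos : 0 < 2 * k * geomT k (r + 1) ^ 2 := Nat.mul_pos (by omega) (pow_pos hNpos 2)
  have hsig_lt : ∀ x : V, encL k (sigl q n pa x) < geomT k (r + 1) := by
    intro x
    have h1 := encL_lt hk (sigl q n pa x) (sigl_mem_lt q n pa x)
    have h2 : geomT k ((sigl q n pa x).length + 1) ≤ geomT k (r + 1) :=
      geomT_mono (by rw [sigl_length]; exact Nat.succ_le_succ (hnr x))
    omega
  set g : Quotient (contractSetoid F) → Quotient (contractSetoid F) → ℕ := fun A B =>
    digQ k (signedQueue q (selp F A B).1 (selp F A B).2) +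
      2 * k * (encL k (sigl q n pa (selp F A B).1) +
        geomT k (r + 1) * encL k (sigl q n pa (selp F A B).2))
    with hg
  have hglt : ∀ A B, g A B < 2 * k * geomT k (r + 1) ^ 2 := fun A B =>
    encode3_lt (by omega) (digQ_signedQueue_lt q _ _) (hsig_lt _) (hsig_lt _)
  set f : Quotient (contractSetoid F) → Quotient (contractSetoid F) → ℕ := fun A B =>
    if A < B then g A B else if B < A then g B A else 0 with hf
  have hfsymm : ∀ A B, f A B = f B A := by
    intro A B
    simp only [hf]
    rcases lt_trichotomy A B with h | rfl | h
    · rw [if_pos h, if_neg (asymm h), if_pos h]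
    · rfl
    · rw [if_neg (asymm h), if_pos h, if_pos h]
  refine ⟨inferInstance, fun s => ⟨Sym2.lift ⟨f, hfsymm⟩ s % (2 * k * geomT k (r + 1) ^ 2), Nat.mod_lt _ hKpos⟩, ?_⟩
  intro A B C D hAB hCD hABlt hCDlt hqeq
  rintro ⟨hAC, hDB⟩
  have hvAB : Sym2.lift ⟨f, hfsymm⟩ s(A, B) % (2 * k * geomT k (r + 1) ^ 2) = g A B := by
    rw [Sym2.lift_mk]
    simp only [hf]
    rw [if_pos hABlt]
    exact Nat.mod_eq_of_lt (hglt A B)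
  have hvCD : Sym2.lift ⟨f, hfsymm⟩ s(C, D) % (2 * k * geomT k (r + 1) ^ 2) = g C D := by
    rw [Sym2.lift_mk]
    simp only [hf]
    rw [if_pos hCDlt]
    exact Nat.mod_eq_of_lt (hglt C D)
  have hgeq : g A B = g C D := by
    have hval := congrArg Fin.val hqeq
    simp only at hval
    rw [hvAB, hvCD] at hval
    exact hval
  obtain ⟨hedgeAB, huA, hvB⟩ := selp_spec F hAB
  obtain ⟨hedgeCD, huC, hvD⟩ := selp_spec F hCD
  simp only [hg] at hgeq
  obtain ⟨hdg, he1, he2⟩ := decode3 (by omega : 0 < k) hNpos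
    (digQ_signedQueue_lt q _ _) (hsig_lt _) (digQ_signedQueue_lt q _ _) (hsig_lt _) hgeq
  set u := (selp F A B).1
  set v := (selp F A B).2
  set u' := (selp F C D).1
  set v' := (selp F C D).2
  have hsq_uv : signedQueue q u v = signedQueue q u' v' :=
    digQ_inj (signedQueue_form q u v) (signedQueue_form q u' v') hdg
  have hsig_u : sigl q n pa u = sigl q n pa u' :=
    encL_inj hk _ _ (sigl_mem_lt q n pa u) (sigl_mem_lt q n pa u') he1
  have hsig_v : sigl q n pa v = sigl q n pa v' :=
    encL_inj hk _ _ (sigl_mem_lt q n pa v) (sigl_mem_lt q n pa v') he2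
  have hnu : n u = n u' := by
    have := congrArg List.length hsig_u
    rwa [sigl_length, sigl_length] at this
  have hnv : n v = n v' := by
    have := congrArg List.length hsig_v
    rwa [sigl_length, sigl_length] at this
  have hptw_u : ∀ i, i < n u →
      signedQueue q (pa u i) (pa u (i + 1)) = signedQueue q (pa u' i) (pa u' (i + 1)) := by
    intro i hi
    have hsig_u' := hsig_u
    simp only [sigl] at hsig_u'
    rw [← hnu] at hsig_u'
    have hdig := list_map_inj_on _ _ _ hsig_u' i (List.mem_range.mpr hi)
    exact digQ_inj (signedQueue_form q _ _) (signedQueue_form q _ _) hdig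
  have hptw_v : ∀ i, i < n v' →
      signedQueue q (pa v' i) (pa v' (i + 1)) = signedQueue q (pa v i) (pa v (i + 1)) := by
    intro i hi
    have hsig_v' := hsig_v
    simp only [sigl] at hsig_v'
    rw [← hnv] at hsig_v'
    have hdig := list_map_inj_on _ _ _ hsig_v' i (List.mem_range.mpr (by omega : i < n v))
    exact (digQ_inj (signedQueue_form q _ _) (signedQueue_form q _ _) hdig).symm
  have hACne : A ≠ C := ne_of_lt hAC
  have hDBne : D ≠ B := ne_of_lt hDB
  -- first chain: u < u'
  have huu' : u < u' := by
    have hne : ∀ i, i ≤ n u → pa u i ≠ pa u' i := by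
      intro i hi heq
      apply hACne
      rw [← huA, ← huC, ← hcls u i hi, ← hcls u' i (by omega), heq]
    have h0 : pa u 0 < pa u' 0 := by
      rw [hp0 u, hp0 u', huA, huC]
      exact (hltc A C).mp hAC
    have hch := chain_lemma hq (n u) (pa u) (pa u')
      (fun i hi => hadj u i hi) (fun i hi => hadj u' i (by omega)) hne hptw_u h0
    rw [hpn u] at hch
    rw [hnu, hpn u'] at hch
    exact hch
  -- second endpoint: v < v'
  have hvne : v ≠ v' := by
    intro heq
    apply hDBne
    rw [← hvD, ← hvB, heq]
  have hvlt : v < v' := (step_lemma hq hedgeAB hedgeCD huu' hsq_uv).lt_of_ne hvne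
  -- second chain: v' < v, contradiction
  have hvv : v' < v := by
    have hne : ∀ i, i ≤ n v' → pa v' i ≠ pa v i := by
      intro i hi heq
      apply hDBne
      rw [← hvD, ← hvB, ← hcls v' i hi, ← hcls v i (by omega), heq]
    have h0 : pa v' 0 < pa v 0 := by
      rw [hp0 v, hp0 v', hvB, hvD]
      exact (hltc D B).mp hDB
    have hch := chain_lemma hq (n v') (pa v') (pa v)
      (fun i hi => hadj v' i hi) (fun i hi => hadj v i (by omega)) hne hptw_v h0
    rw [hpn v'] at hch
    rw [← hnv, hpn v] at hch
    exact hch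
  exact absurd hvlt (asymm hvv)
end

section
/- For every graph G: (a) π(H) ≤ π(G) + 1 for every (≤1)-subdivision H of G; (b) π(H) ≤ π(G) + 2 for every (≤2)-subdivision H of G; (c) π(H) ≤ π(G) + 3 for every subdivision H of G. -/
open SimpleGraph MeasureTheory Filter

namespace Stmt12Aux

/-- Thue–Morse sequence: parity of the number of ones in the binary expansion. -/
def tm (n : ℕ) : Bool := (Nat.digits 2 n).sum % 2 == 1

lemma tm_two_mul (n : ℕ) : tm (2 * n) = tm n := by
  rcases Nat.eq_zero_or_pos n with rfl | hn
  · rfl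
  · unfold tm
    rw [Nat.digits_def' (by norm_num) (by omega)]
    simp [Nat.mul_div_cancel_left _ (by norm_num : 0 < 2), Nat.mul_mod_right]

lemma tm_two_mul_add_one (n : ℕ) : tm (2 * n + 1) = !tm n := by
  unfold tm
  rw [Nat.digits_def' (by norm_num) (by omega)]
  have h1 : (2 * n + 1) % 2 = 1 := by omega
  have h2 : (2 * n + 1) / 2 = n := by omega
  rw [h1, h2, List.sum_cons]
  rcases Nat.mod_two_eq_zero_or_one ((Nat.digits 2 n).sum) with h | h <;>
    simp [Nat.add_mod, h]

lemma tm_even_ne (m : ℕ) : tm (2 * m) ≠ tm (2 * m + 1) := by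
  rw [tm_two_mul, tm_two_mul_add_one]
  cases tm m <;> simp

lemma tm_ne_succ_of_even {n : ℕ} (h : n % 2 = 0) : tm n ≠ tm (n + 1) := by
  obtain ⟨m, rfl⟩ : ∃ m, n = 2 * m := ⟨n / 2, by omega⟩
  exact tm_even_ne m

/-- Thue–Morse is overlap-free. -/
theorem tm_no_overlap : ∀ p, 0 < p → ∀ a, ¬ (∀ i ≤ p, tm (a + i) = tm (a + i + p)) := by
  intro p
  induction p using Nat.strong_induction_on with
  | _ p IH =>
  intro hp a hov
  rcases Nat.lt_or_ge p 2 with h2 | h2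
  · -- p = 1 : three consecutive equal letters
    interval_cases p
    have e0 := hov 0 (by norm_num)
    have e1 := hov 1 (by norm_num)
    simp only [Nat.add_zero] at e0 e1
    rcases Nat.even_or_odd a with ⟨m, hm⟩ | ⟨m, hm⟩
    · exact tm_ne_succ_of_even (by omega) e0
    · refine tm_ne_succ_of_even (n := a + 1) (by omega) ?_
      rw [show a + 1 + 1 = a + 1 + 1 by rfl]
      exact e1
  rcases Nat.even_or_odd p with ⟨q, hq⟩ | hodd
  · -- p even : reduce to q
    have hq1 : 0 < q := by omega
    rcases Nat.even_or_odd a with ⟨b, hb⟩ | ⟨b, hb⟩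
    · refine IH q (by omega) hq1 b fun j hj => ?_
      have h := hov (2 * j) (by omega)
      rw [show a + 2 * j = 2 * (b + j) by omega,
        show 2 * (b + j) + p = 2 * (b + j + q) by omega, tm_two_mul, tm_two_mul] at h
      exact h
    · refine IH q (by omega) hq1 b fun j hj => ?_
      have h := hov (2 * j) (by omega)
      rw [show a + 2 * j = 2 * (b + j) + 1 by omega,
        show 2 * (b + j) + 1 + p = 2 * (b + j + q) + 1 by omega,
        tm_two_mul_add_one, tm_two_mul_add_one] at h
      simpa using h
  · -- p odd, p ≥ 3 : the window alternates, giving a period-2 overlap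
    have alt : ∀ n, a ≤ n → n < a + 2 * p → tm n ≠ tm (n + 1) := by
      intro n hn1 hn2
      rcases Nat.even_or_odd n with ⟨m, hm⟩ | hodd_n
      · exact tm_ne_succ_of_even (by omega)
      · -- n odd; find the even partner n+p or n-p
        rcases Nat.lt_or_ge n (a + p) with hlt | hge
        · -- partner n + p (even)
          obtain ⟨i, hi⟩ := Nat.le.dest hn1
          have e1 : tm n = tm (n + p) := by
            have := hov i (by omega); rwa [hi] at this
          have e2 : tm (n + 1) = tm (n + 1 + p) := by
            have := hov (i + 1) (by omega)
            rw [show a + (i + 1) = n + 1 by omega] at this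
            exact this
          rw [e1, e2, show n + 1 + p = n + p + 1 by ring]
          have hpar : (n + p) % 2 = 0 := by
            rcases hodd with ⟨r, hr⟩; rcases hodd_n with ⟨sN, hs⟩; omega
          exact tm_ne_succ_of_even hpar
        · -- partner n - p (even)
          obtain ⟨i, hi⟩ := Nat.le.dest hge  -- a + p + i = n
          have e1 : tm (a + i) = tm n := by
            have := hov i (by omega); rw [show a + i + p = n by omega] at this; exact this
          have e2 : tm (a + i + 1) = tm (n + 1) := by
            have := hov (i + 1) (by omega)
            rw [show a + (i + 1) = a + i + 1 by ring, show a + i + 1 + p = n + 1 by omega] at this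
            exact this
          rw [← e1, ← e2]
          have hpar : (a + i) % 2 = 0 := by
            rcases hodd with ⟨r, hr⟩; rcases hodd_n with ⟨sN, hs⟩; omega
          exact tm_ne_succ_of_even hpar
    -- alternation of length ≥ 5 gives an overlap with period 2
    refine IH 2 (by rcases hodd with ⟨r, hr⟩; omega) (by norm_num) a fun i hi => ?_
    have a1 := alt (a + i) (by omega) (by omega)
    have a2 := alt (a + i + 1) (by omega) (by omega)
    rw [show a + i + 1 + 1 = a + i + 2 by ring] at a2
    revert a1 a2
    cases tm (a + i) <;> cases tm (a + i + 1) <;> cases tm (a + i + 2) <;> simp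

/-- The ternary squarefree word: `w3 n` encodes `tm (n+1) - tm n + 1`. -/
def w3 (n : ℕ) : Fin 3 :=
  ⟨1 + (if tm (n + 1) then 1 else 0) - (if tm n then 1 else 0), by split <;> split <;> omega⟩

lemma w3_eq_iff {x y : ℕ} : w3 x = w3 y ↔
    ((if tm (x + 1) then (1:ℤ) else 0) - (if tm x then 1 else 0)
      = (if tm (y + 1) then 1 else 0) - (if tm y then 1 else 0)) := by
  rw [Fin.ext_iff]
  simp only [w3]
  split <;> split <;> split <;> split <;> omega

/-- The word `w3` is squarefree. -/
theorem w3_squarefree (t s : ℕ) (hs : 0 < s) : ∃ i < s, w3 (t + i) ≠ w3 (t + i + s) := by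
  by_contra hcon
  push_neg at hcon
  -- e i := b(t+s+i) - b(t+i) is constant for i ≤ s
  set b : ℕ → ℤ := fun n => if tm n then 1 else 0 with hb
  have hd : ∀ i < s, b (t + i + 1) - b (t + i) = b (t + s + i + 1) - b (t + s + i) := by
    intro i hi
    have := w3_eq_iff.mp (hcon i hi)
    rw [show t + i + s = t + s + i by ring] at this
    exact this
  have econst : ∀ i ≤ s, b (t + s + i) - b (t + i) = b (t + s) - b t := by
    intro i hi
    induction i with
    | zero => simp
    | succ j ihj =>
      have h1 := hd j (by omega)
      have h2 := ihj (by omega)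
      have : b (t + s + (j+1)) - b (t + (j+1)) = b (t + s + j) - b (t + j) := by
        rw [show t + s + (j+1) = t + s + j + 1 by ring, show t + (j+1) = t + j + 1 by ring]
        omega
      omega
  have hbval : ∀ n, b n = 0 ∨ b n = 1 := by intro n; simp only [hb]; split <;> simp
  rcases (by rcases hbval (t+s) with h1|h1 <;> rcases hbval t with h2|h2 <;> omega :
      b (t + s) - b t = 0 ∨ b (t + s) - b t = 1 ∨ b (t + s) - b t = -1) with h0 | h1 | h1
  · -- overlap in tm with period s
    refine tm_no_overlap s hs t fun i hi => ?_
    have := econst i hi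
    rw [h0] at this
    have : b (t + i) = b (t + i + s) := by rw [show t + i + s = t + s + i by ring]; omega
    simp only [hb] at this
    revert this; split <;> split <;> simp_all
  · -- b constant 0 on [t, t+s]
    have hzero : ∀ i ≤ s, b (t + i) = 0 := by
      intro i hi
      have := econst i hi
      rcases hbval (t + s + i) with h | h <;> rcases hbval (t + i) with h' | h' <;> omega
    rcases Nat.lt_or_ge s 2 with hs2 | hs2
    · -- s = 1: b(t)=0, b(t+1)=? e const: b(t+1)-b(t)=1 and b(t+2)-b(t+1)=1: b(t+2)=2 impossible
      interval_cases s
      have g0 := econst 0 (by norm_num)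
      have g1 := econst 1 (by norm_num)
      have v0 := hbval t; have v1 := hbval (t+1); have v2 := hbval (t+1+1)
      rw [show t + 1 + 0 = t + 1 by ring, show t + 0 = t by ring] at g0
      omega
    · -- tm constant on [t, t+s], length ≥ 3: period-1 overlap
      refine tm_no_overlap 1 (by norm_num) t fun i hi => ?_
      have h0 := hzero i (by omega)
      have h1 := hzero (i + 1) (by omega)
      rw [show t + (i+1) = t + i + 1 by ring] at h1
      simp only [hb] at h0 h1
      revert h0 h1; split <;> split <;> simp_all
  · -- b constant 1 on [t, t+s]
    have hone : ∀ i ≤ s, b (t + i) = 1 := by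
      intro i hi
      have := econst i hi
      rcases hbval (t + s + i) with h | h <;> rcases hbval (t + i) with h' | h' <;> omega
    rcases Nat.lt_or_ge s 2 with hs2 | hs2
    · interval_cases s
      have g0 := econst 0 (by norm_num)
      have g1 := econst 1 (by norm_num)
      have v0 := hbval t; have v1 := hbval (t+1); have v2 := hbval (t+1+1)
      rw [show t + 1 + 0 = t + 1 by ring, show t + 0 = t by ring] at g0
      omega
    · refine tm_no_overlap 1 (by norm_num) t fun i hi => ?_
      have h0 := hone i (by omega)
      have h1 := hone (i + 1) (by omega)
      rw [show t + (i+1) = t + i + 1 by ring] at h1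
      simp only [hb] at h0 h1
      revert h0 h1; split <;> split <;> simp_all
end Stmt12Aux

namespace Stmt12Aux

open SimpleGraph

variable {V W : Type*} {G : SimpleGraph V} {H : SimpleGraph W}

lemma walk_edges_eq {u v : W} (p : H.Walk u v) :
    p.edges = List.zipWith (fun a b => s(a, b)) p.support p.support.tail := by
  induction p with
  | nil => simp
  | cons h q ih =>
    rw [Walk.edges_cons, Walk.support_cons, ih]
    rw [q.support_eq_cons]
    simp only [List.tail_cons, List.zipWith_cons_cons]

lemma mem_edges_iff_getElem {u v : W} (p : H.Walk u v) {e : Sym2 W} (he : e ∈ p.edges) :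
    ∃ i, ∃ h1 : i + 1 < p.support.length, e = s(p.support[i], p.support[i+1]) := by
  rw [walk_edges_eq] at he
  obtain ⟨i, hi, hei⟩ := List.mem_iff_getElem.mp he
  rw [List.getElem_zipWith] at hei
  rw [List.length_zipWith, List.length_tail] at hi
  have h1 : i + 1 < p.support.length := by omega
  refine ⟨i, h1, ?_⟩
  rw [← hei, List.getElem_tail]

/-- Helper: paths over the same `Sym2` edge have equal or reversed supports. -/
lemma support_eq_or_reverse (S : SubdivisionWitness G H) {a b a' b' : V}
    (h : G.Adj a b) (h' : G.Adj a' b') (he : s(a', b') = s(a, b)) :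
    (S.path h').support = (S.path h).support ∨
      (S.path h').support = (S.path h).support.reverse := by
  rcases Sym2.eq_iff.mp he with ⟨rfl, rfl⟩ | ⟨rfl, rfl⟩
  · left; rfl
  · right
    have : S.path h' = (S.path h).reverse := S.path_symm h
    rw [this, Walk.support_reverse]

lemma edges_eq_or_reverse (S : SubdivisionWitness G H) {a b a' b' : V}
    (h : G.Adj a b) (h' : G.Adj a' b') (he : s(a', b') = s(a, b)) :
    (S.path h').edges = (S.path h).edges ∨
      (S.path h').edges = (S.path h).edges.reverse := by
  rcases Sym2.eq_iff.mp he with ⟨rfl, rfl⟩ | ⟨rfl, rfl⟩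
  · left; rfl
  · right
    have : S.path h' = (S.path h).reverse := S.path_symm h
    rw [this, Walk.edges_reverse]

lemma length_eq_of_sym2_eq (S : SubdivisionWitness G H) {a b a' b' : V}
    (h : G.Adj a b) (h' : G.Adj a' b') (he : s(a', b') = s(a, b)) :
    (S.path h').length = (S.path h).length := by
  rcases Sym2.eq_iff.mp he with ⟨rfl, rfl⟩ | ⟨rfl, rfl⟩
  · rfl
  · have : S.path h' = (S.path h).reverse := S.path_symm h
    rw [this, Walk.length_reverse]

lemma pa_exists (e : Sym2 V) : ∃ p : V × V, s(p.1, p.2) = e :=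
  Sym2.inductionOn e fun x y => ⟨(x, y), rfl⟩

/-- Canonical ordered pair representing a `Sym2`. -/
noncomputable def pa (e : Sym2 V) : V × V := (pa_exists e).choose

lemma pa_spec (e : Sym2 V) : s((pa e).1, (pa e).2) = e := (pa_exists e).choose_spec

lemma cadj {e : Sym2 V} (he : e ∈ G.edgeSet) : G.Adj (pa e).1 (pa e).2 := by
  rw [← SimpleGraph.mem_edgeSet, pa_spec]; exact he

/-- The canonical path of an edge, and its support list. -/
noncomputable def cpath (S : SubdivisionWitness G H) (e : Sym2 V) (he : e ∈ G.edgeSet) :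
    H.Walk (S.emb (pa e).1) (S.emb (pa e).2) := S.path (cadj he)

noncomputable def CL (S : SubdivisionWitness G H) (e : Sym2 V) (he : e ∈ G.edgeSet) :
    List W := (cpath S e he).support

lemma CL_eq_or_reverse (S : SubdivisionWitness G H) {a b : V} (h : G.Adj a b)
    {e : Sym2 V} (he : e ∈ G.edgeSet) (hee : s(a, b) = e) :
    CL S e he = (S.path h).support ∨ CL S e he = (S.path h).support.reverse :=
  support_eq_or_reverse S h (cadj he) (by rw [pa_spec, hee])

lemma mem_CL_of_mem_support (S : SubdivisionWitness G H) {a b : V} (h : G.Adj a b)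
    {e : Sym2 V} (he : e ∈ G.edgeSet) (hee : s(a, b) = e) {w : W}
    (hw : w ∈ (S.path h).support) : w ∈ CL S e he := by
  rcases CL_eq_or_reverse S h he hee with h' | h' <;> rw [h'] <;> simp [hw]

lemma mem_CL_edges (S : SubdivisionWitness G H) {a b : V} (h : G.Adj a b)
    {e : Sym2 V} (he : e ∈ G.edgeSet) (hee : s(a, b) = e) {f : Sym2 W}
    (hf : f ∈ (S.path h).edges) : f ∈ (cpath S e he).edges := by
  show f ∈ (S.path (cadj he)).edges
  rcases edges_eq_or_reverse S h (cadj he) (by rw [pa_spec, hee]) with h' | h' <;>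
    rw [h'] <;> simp [hf]

lemma CL_nodup (S : SubdivisionWitness G H) (e : Sym2 V) (he : e ∈ G.edgeSet) :
    (CL S e he).Nodup := (S.path_isPath (cadj he)).support_nodup

lemma CL_length (S : SubdivisionWitness G H) (e : Sym2 V) (he : e ∈ G.edgeSet) :
    (CL S e he).length = (cpath S e he).length + 1 := Walk.length_support _

lemma CL_length_ge (S : SubdivisionWitness G H) (e : Sym2 V) (he : e ∈ G.edgeSet) :
    2 ≤ (CL S e he).length := by
  rw [CL_length]
  have hne : (cpath S e he).length ≠ 0 := by
    intro h0
    have hlen : (cpath S e he).support.length = 1 := by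
      rw [Walk.length_support, h0]
    obtain ⟨x, hx⟩ := List.length_eq_one_iff.mp hlen
    have h1 := (cpath S e he).start_mem_support
    have h2 := (cpath S e he).end_mem_support
    rw [hx] at h1 h2
    simp only [List.mem_singleton] at h1 h2
    have hs : S.emb (pa e).1 = S.emb (pa e).2 := h1.trans h2.symm
    exact (cadj he).ne (S.emb.injective hs)
  omega

/-- Whether a vertex of `H` is an original (embedded) vertex. -/
def Orig (S : SubdivisionWitness G H) (w : W) : Prop := ∃ x : V, S.emb x = w

end Stmt12Aux

namespace Stmt12Aux

open SimpleGraph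

variable {V W : Type*} {G : SimpleGraph V} {H : SimpleGraph W}

lemma dSpec (S : SubdivisionWitness G H) (w : W) (hw : ¬ Orig S w) :
    ∃ a b, ∃ h : G.Adj a b, w ∈ (S.path h).support := (S.vert_cover w).resolve_left hw

noncomputable def dA (S : SubdivisionWitness G H) (w : W) (hw : ¬ Orig S w) : V :=
  (dSpec S w hw).choose

noncomputable def dB (S : SubdivisionWitness G H) (w : W) (hw : ¬ Orig S w) : V :=
  (dSpec S w hw).choose_spec.choose

lemma dAdj (S : SubdivisionWitness G H) (w : W) (hw : ¬ Orig S w) :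
    G.Adj (dA S w hw) (dB S w hw) := (dSpec S w hw).choose_spec.choose_spec.choose

lemma dMem (S : SubdivisionWitness G H) (w : W) (hw : ¬ Orig S w) :
    w ∈ (S.path (dAdj S w hw)).support :=
  (dSpec S w hw).choose_spec.choose_spec.choose_spec

/-- The unique edge of `G` whose path contains the division vertex `w`. -/
noncomputable def dEdge (S : SubdivisionWitness G H) (w : W) (hw : ¬ Orig S w) : Sym2 V :=
  s(dA S w hw, dB S w hw)

lemma dEdge_mem (S : SubdivisionWitness G H) (w : W) (hw : ¬ Orig S w) :
    dEdge S w hw ∈ G.edgeSet := (dAdj S w hw)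

lemma dEdge_unique (S : SubdivisionWitness G H) (w : W) (hw : ¬ Orig S w) {a b : V}
    (h : G.Adj a b) (hmem : w ∈ (S.path h).support) : dEdge S w hw = s(a, b) := by
  by_contra hne
  obtain ⟨x, hx⟩ := S.internally_disjoint (dAdj S w hw) h hne w (dMem S w hw) hmem
  exact hw ⟨x, hx⟩

lemma mem_CL_dEdge (S : SubdivisionWitness G H) (w : W) (hw : ¬ Orig S w) :
    w ∈ CL S (dEdge S w hw) (dEdge_mem S w hw) :=
  mem_CL_of_mem_support S (dAdj S w hw) _ rfl (dMem S w hw)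

/-- indexOf with a classical instance baked in. -/
noncomputable def lidx (l : List W) (w : W) : ℕ :=
  letI := Classical.decEq W; l.idxOf w

lemma lidx_lt {l : List W} {w : W} (h : w ∈ l) : lidx l w < l.length := by
  letI := Classical.decEq W
  exact List.idxOf_lt_length_iff.mpr h

lemma getElem_lidx {l : List W} {w : W} (h : w ∈ l) : l[lidx l w]'(lidx_lt h) = w := by
  letI := Classical.decEq W
  exact List.getElem_idxOf (List.idxOf_lt_length_iff.mpr h)

lemma lidx_getElem {l : List W} (hnd : l.Nodup) {i : ℕ} (hi : i < l.length) :
    lidx l (l[i]'hi) = i := by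
  have hmem : l[i]'hi ∈ l := List.getElem_mem _
  have h1 := getElem_lidx hmem
  exact (List.Nodup.getElem_inj_iff hnd).mp h1

lemma lidx_inj {l : List W} {w w' : W} (hw : w ∈ l) (hw' : w' ∈ l)
    (h : lidx l w = lidx l w') : w = w' := by
  have h1 := getElem_lidx hw
  have h2 := getElem_lidx hw'
  rw [← h1, ← h2]
  congr 1

/-- Index of the division vertex `w` along the canonical path of its edge. -/
noncomputable def idxw (S : SubdivisionWitness G H) (w : W) (hw : ¬ Orig S w) : ℕ :=
  lidx (CL S (dEdge S w hw) (dEdge_mem S w hw)) w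

lemma idxw_eq (S : SubdivisionWitness G H) (w : W) (hw : ¬ Orig S w) {e : Sym2 V}
    (he : e ∈ G.edgeSet) (hee : dEdge S w hw = e) :
    idxw S w hw = lidx (CL S e he) w := by subst hee; rfl

lemma dEdge_adj_eq (S : SubdivisionWitness G H) {w w' : W} (hw : ¬ Orig S w)
    (hw' : ¬ Orig S w') (hadj : H.Adj w w') : dEdge S w hw = dEdge S w' hw' := by
  obtain ⟨a, b, h, hf⟩ := S.edge_cover s(w, w') (H.mem_edgeSet.mpr hadj)
  rw [dEdge_unique S w hw h (Walk.fst_mem_support_of_mem_edges _ hf),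
    dEdge_unique S w' hw' h (Walk.snd_mem_support_of_mem_edges _ hf)]

lemma idx_step (S : SubdivisionWitness G H) {w w' : W} (hw : ¬ Orig S w)
    (hw' : ¬ Orig S w') (hadj : H.Adj w w') {e : Sym2 V} (he : e ∈ G.edgeSet)
    (hee : dEdge S w hw = e) :
    idxw S w' hw' = idxw S w hw + 1 ∨ idxw S w hw = idxw S w' hw' + 1 := by
  obtain ⟨a, b, h, hf⟩ := S.edge_cover s(w, w') (H.mem_edgeSet.mpr hadj)
  have hsab : s(a, b) = e := by
    rw [← dEdge_unique S w hw h (Walk.fst_mem_support_of_mem_edges _ hf), hee]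
  have hf2 : s(w, w') ∈ (cpath S e he).edges := mem_CL_edges S h he hsab hf
  obtain ⟨i, h1, hi⟩ := mem_edges_iff_getElem _ hf2
  have hnd : (CL S e he).Nodup := CL_nodup S e he
  have hee' : dEdge S w' hw' = e := by rw [← dEdge_adj_eq S hw hw' hadj, hee]
  rw [idxw_eq S w hw he hee, idxw_eq S w' hw' he hee']
  have hlen : (cpath S e he).support.length = (CL S e he).length := rfl
  rcases Sym2.eq_iff.mp hi with ⟨hww, hww'⟩ | ⟨hww, hww'⟩
  · left
    have e1 : lidx (CL S e he) w = i := by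
      rw [hww]; exact lidx_getElem hnd (by omega)
    have e2 : lidx (CL S e he) w' = i + 1 := by
      rw [hww']; exact lidx_getElem hnd (by omega)
    rw [e1, e2]
  · right
    have e1 : lidx (CL S e he) w = i + 1 := by
      rw [hww]; exact lidx_getElem hnd (by omega)
    have e2 : lidx (CL S e he) w' = i := by
      rw [hww']; exact lidx_getElem hnd (by omega)
    rw [e1, e2]

lemma idx_window (S : SubdivisionWitness G H) {w : W} (hw : ¬ Orig S w) {e : Sym2 V}
    (he : e ∈ G.edgeSet) (hee : dEdge S w hw = e) :
    1 ≤ idxw S w hw ∧ idxw S w hw + 2 ≤ (CL S e he).length := by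
  subst hee
  have hmem : w ∈ CL S (dEdge S w hw) he := mem_CL_dEdge S w hw
  have hlt : lidx (CL S (dEdge S w hw) he) w < (CL S (dEdge S w hw) he).length := lidx_lt hmem
  have hnd := CL_nodup S (dEdge S w hw) he
  have hlen2 := CL_length_ge S (dEdge S w hw) he
  have hsupp : (cpath S (dEdge S w hw) he).support.length
      = (CL S (dEdge S w hw) he).length := rfl
  rw [idxw_eq S w hw he rfl]
  have hget := getElem_lidx hmem
  have hh0 : (CL S (dEdge S w hw) he)[0]'(by omega) = S.emb (pa (dEdge S w hw)).1 := by
    have h5 := List.getElem_of_eq ((cpath S (dEdge S w hw) he).support_eq_cons)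
      (show 0 < (cpath S (dEdge S w hw) he).support.length by omega)
    exact h5.trans (List.getElem_cons_zero _ _ _)
  have hlast : (CL S (dEdge S w hw) he)[(CL S (dEdge S w hw) he).length - 1]'(by omega)
      = S.emb (pa (dEdge S w hw)).2 := by
    have h2 := List.getLast_eq_getElem
      ((cpath S (dEdge S w hw) he).support_ne_nil)
    have h3 := Walk.getLast_support (cpath S (dEdge S w hw) he)
    rw [h2] at h3
    exact h3
  constructor
  · rcases Nat.eq_zero_or_pos (lidx (CL S (dEdge S w hw) he) w) with h0 | h1
    · exfalso
      apply hw
      refine ⟨(pa (dEdge S w hw)).1, ?_⟩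
      rw [← hh0]
      conv_rhs => rw [← hget]
      congr 1
      exact h0.symm
    · exact h1
  · rcases Nat.lt_or_ge (lidx (CL S (dEdge S w hw) he) w)
      ((CL S (dEdge S w hw) he).length - 1) with hlt' | hge
    · omega
    · exfalso
      apply hw
      refine ⟨(pa (dEdge S w hw)).2, ?_⟩
      rw [← hlast]
      conv_rhs => rw [← hget]
      congr 1
      omega

end Stmt12Aux

namespace Stmt12Aux

open SimpleGraph

variable {V W : Type*} {G : SimpleGraph V} {H : SimpleGraph W}

lemma pair_adj {a b : V} (hab : G.Adj a b) {x1 x2 : V} (hx1 : x1 = a ∨ x1 = b)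
    (hx2 : x2 = a ∨ x2 = b) (hne : x1 ≠ x2) : G.Adj x1 x2 := by
  rcases hx1 with rfl | rfl <;> rcases hx2 with rfl | rfl
  · exact absurd rfl hne
  · exact hab
  · exact hab.symm
  · exact absurd rfl hne

lemma mem_CL_of_dEdge_eq (S : SubdivisionWitness G H) {w : W} (hw : ¬ Orig S w)
    {e : Sym2 V} (he : e ∈ G.edgeSet) (hee : dEdge S w hw = e) : w ∈ CL S e he := by
  subst hee; exact mem_CL_dEdge S w hw

/-- Two original vertices consecutive on a path (with only division vertices between them)
are adjacent in `G`. -/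
lemma orig_run_adj (S : SubdivisionWitness G H) {v : ℕ → W} {n : ℕ}
    (hadj : ∀ i, i + 1 < n → H.Adj (v i) (v (i + 1)))
    {p1 p2 : ℕ} (hp : p1 < p2) (hp2 : p2 < n) {x1 x2 : V}
    (h1 : S.emb x1 = v p1) (h2 : S.emb x2 = v p2) (hx : x1 ≠ x2)
    (hdiv : ∀ q, p1 < q → q < p2 → ¬ Orig S (v q)) : G.Adj x1 x2 := by
  rcases Nat.eq_or_lt_of_le hp with heq | hlt
  · -- p2 = p1 + 1
    have hadj1 : H.Adj (v p1) (v p2) := by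
      rw [← heq]; exact hadj p1 (by omega)
    obtain ⟨a, b, hab, hf⟩ := S.edge_cover s(v p1, v p2) (H.mem_edgeSet.mpr hadj1)
    have m1 : S.emb x1 ∈ (S.path hab).support := by
      rw [h1]; exact Walk.fst_mem_support_of_mem_edges _ hf
    have m2 : S.emb x2 ∈ (S.path hab).support := by
      rw [h2]; exact Walk.snd_mem_support_of_mem_edges _ hf
    exact pair_adj hab (S.internal_new hab x1 m1) (S.internal_new hab x2 m2) hx
  · -- p1 + 1 < p2
    have hd1 : ¬ Orig S (v (p1 + 1)) := hdiv _ (by omega) (by omega)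
    have key : ∀ d (hq : ¬ Orig S (v (p1 + 1 + d))), p1 + 1 + d < p2 →
        dEdge S (v (p1 + 1 + d)) hq = dEdge S (v (p1 + 1)) hd1 := by
      intro d
      induction d with
      | zero => intro hq _; rfl
      | succ d ih =>
        intro hq hlt2
        have hdn : ¬ Orig S (v (p1 + 1 + d)) := hdiv _ (by omega) (by omega)
        have hadjd : H.Adj (v (p1 + 1 + d)) (v (p1 + 1 + (d + 1))) := by
          have := hadj (p1 + 1 + d) (by omega)
          rwa [show p1 + 1 + d + 1 = p1 + 1 + (d + 1) by ring] at this
        rw [← dEdge_adj_eq S hdn hq hadjd]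
        exact ih hdn (by omega)
    obtain ⟨a, b, hab, hf⟩ := S.edge_cover s(v p1, v (p1 + 1))
      (H.mem_edgeSet.mpr (hadj p1 (by omega)))
    have hsab : dEdge S (v (p1 + 1)) hd1 = s(a, b) :=
      dEdge_unique S _ hd1 hab (Walk.snd_mem_support_of_mem_edges _ hf)
    have hx1ab : x1 = a ∨ x1 = b := S.internal_new hab x1 (by
      rw [h1]; exact Walk.fst_mem_support_of_mem_edges _ hf)
    obtain ⟨pm, rfl⟩ : ∃ pm, p2 = pm + 1 := ⟨p2 - 1, by omega⟩
    obtain ⟨d, hdm_eq⟩ : ∃ d, p1 + 1 + d = pm := ⟨pm - (p1 + 1), by omega⟩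
    have hdm : ¬ Orig S (v pm) := hdiv pm (by omega) (by omega)
    obtain ⟨a', b', hab', hf'⟩ := S.edge_cover s(v pm, v (pm + 1))
      (H.mem_edgeSet.mpr (hadj pm (by omega)))
    have hsab' : dEdge S (v pm) hdm = s(a', b') :=
      dEdge_unique S _ hdm hab' (Walk.fst_mem_support_of_mem_edges _ hf')
    have hx2ab : x2 = a' ∨ x2 = b' := S.internal_new hab' x2 (by
      rw [h2]; exact Walk.snd_mem_support_of_mem_edges _ hf')
    have hEq : s(a', b') = s(a, b) := by
      rw [← hsab', ← hsab]
      subst hdm_eq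
      exact key d hdm (by omega)
    have hx2ab' : x2 = a ∨ x2 = b := by
      rcases Sym2.eq_iff.mp hEq with ⟨rfl, rfl⟩ | ⟨rfl, rfl⟩
      · exact hx2ab
      · tauto
    exact pair_adj hab hx1ab hx2ab' hx

/-- The colouring of the subdivision. -/
noncomputable def col (S : SubdivisionWitness G H) {k m : ℕ} (c : V → Fin k)
    (word : ℕ → Fin m) (w : W) : Fin (k + m) :=
  letI := Classical.dec (Orig S w)
  if hw : Orig S w then Fin.castAdd m (c hw.choose) else Fin.natAdd k (word (idxw S w hw))

variable {k m : ℕ} {c : V → Fin k} {word : ℕ → Fin m}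

lemma col_orig (S : SubdivisionWitness G H) (x : V) :
    col S c word (S.emb x) = Fin.castAdd m (c x) := by
  have hw : Orig S (S.emb x) := ⟨x, rfl⟩
  unfold col
  rw [dif_pos hw, S.emb.injective hw.choose_spec]

lemma col_val_lt (S : SubdivisionWitness G H) {w : W} (hw : Orig S w) :
    (col S c word w).val < k := by
  unfold col
  rw [dif_pos hw]
  simpa using (c hw.choose).isLt

lemma col_val_ge (S : SubdivisionWitness G H) {w : W} (hw : ¬ Orig S w) :
    k ≤ (col S c word w).val := by
  unfold col
  rw [dif_neg hw]
  simp

lemma orig_iff_of_col_eq (S : SubdivisionWitness G H) {w w' : W}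
    (h : col S c word w = col S c word w') : Orig S w ↔ Orig S w' := by
  constructor <;> intro ho <;> by_contra ho'
  · have h1 := col_val_lt S (c := c) (word := word) ho
    have h2 := col_val_ge S (c := c) (word := word) ho'
    rw [h] at h1; omega
  · have h1 := col_val_lt S (c := c) (word := word) ho
    have h2 := col_val_ge S (c := c) (word := word) ho'
    rw [← h] at h1; omega

lemma col_eq_orig (S : SubdivisionWitness G H) {x x' : V}
    (h : col S c word (S.emb x) = col S c word (S.emb x')) : c x = c x' := by
  rw [col_orig, col_orig] at h
  have := congrArg Fin.val h
  simp only [Fin.coe_castAdd] at this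
  exact Fin.ext this

lemma col_eq_div (S : SubdivisionWitness G H) {w w' : W} (hw : ¬ Orig S w)
    (hw' : ¬ Orig S w') (h : col S c word w = col S c word w') :
    word (idxw S w hw) = word (idxw S w' hw') := by
  unfold col at h
  rw [dif_neg hw, dif_neg hw'] at h
  have := congrArg Fin.val h
  simp only [Fin.coe_natAdd] at this
  exact Fin.ext (by omega)

end Stmt12Aux

namespace Stmt12Aux

open SimpleGraph

variable {V W : Type*} {G : SimpleGraph V} {H : SimpleGraph W}

theorem nonrep_col (S : SubdivisionWitness G H) {k m : ℕ} (c : V → Fin k)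
    (hc : NonRepColoring G c) (word : ℕ → Fin m)
    (hword : ∀ (e : Sym2 V) (he : e ∈ G.edgeSet) (t s : ℕ), 0 < s → 1 ≤ t →
      t + 2 * s + 1 ≤ (CL S e he).length → ∃ i, i < s ∧ word (t + i) ≠ word (t + i + s)) :
    NonRepColoring H (col S c word) := by
  classical
  intro s hs v hdis hadj hrep
  have htype : ∀ i, i < s → (Orig S (v i) ↔ Orig S (v (i + s))) := fun i hi =>
    orig_iff_of_col_eq S (hrep i hi)
  by_cases hA : ∃ i, i < 2 * s ∧ Orig S (v i)
  · -- Case A : some original vertex on the path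
    obtain ⟨i0, hi0, ho0⟩ := hA
    have hfirst : ∃ i, i < s ∧ Orig S (v i) := by
      rcases Nat.lt_or_ge i0 s with h | h
      · exact ⟨i0, h, ho0⟩
      · refine ⟨i0 - s, by omega, (htype (i0 - s) (by omega)).mpr ?_⟩
        rwa [show i0 - s + s = i0 by omega]
    set O1 : Finset ℕ := (Finset.range s).filter (fun i => Orig S (v i)) with hO1def
    have hmemO1 : ∀ p, p ∈ O1 ↔ (p < s ∧ Orig S (v p)) := by
      intro p
      simp [hO1def, Finset.mem_filter, Finset.mem_range]
    have hr : 0 < O1.card := by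
      obtain ⟨i, hi, ho⟩ := hfirst
      exact Finset.card_pos.mpr ⟨i, (hmemO1 i).mpr ⟨hi, ho⟩⟩
    set r := O1.card with hrdef
    set ι := O1.orderIsoOfFin (rfl : O1.card = r) with hιdef
    have ιmem : ∀ j : Fin r, (ι j : ℕ) ∈ O1 := fun j => (ι j).2
    have ιlt : ∀ j : Fin r, (ι j : ℕ) < s := fun j => ((hmemO1 _).mp (ιmem j)).1
    have ιorig : ∀ j : Fin r, Orig S (v (ι j)) := fun j => ((hmemO1 _).mp (ιmem j)).2
    have ιmono : ∀ j j' : Fin r, j < j' → (ι j : ℕ) < (ι j' : ℕ) := by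
      intro j j' h
      exact Subtype.coe_lt_coe.mpr (ι.strictMono h)
    have ιmono' : ∀ j j' : Fin r, j ≤ j' → (ι j : ℕ) ≤ (ι j' : ℕ) := by
      intro j j' h
      exact Subtype.coe_le_coe.mpr (ι.monotone h)
    have ιrefl : ∀ j j' : Fin r, (ι j : ℕ) < (ι j' : ℕ) → j < j' := by
      intro j j' h
      by_contra hcon
      exact absurd (ιmono' j' j (not_lt.mp hcon)) (by omega)
    have ιsurj : ∀ p ∈ O1, ∃ j : Fin r, (ι j : ℕ) = p := by
      intro p hp
      obtain ⟨j, hj⟩ := ι.surjective ⟨p, hp⟩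
      exact ⟨j, by rw [hj]⟩
    set q : ℕ → ℕ := fun j =>
      if h : j < r then (ι ⟨j, h⟩ : ℕ)
      else if h2 : j - r < r then (ι ⟨j - r, h2⟩ : ℕ) + s else 0 with hqdef
    have hql : ∀ j (h : j < r), q j = (ι ⟨j, h⟩ : ℕ) := by
      intro j h
      simp only [hqdef]
      rw [dif_pos h]
    have hqr : ∀ j (h1 : r ≤ j) (h2 : j < 2 * r), q j = (ι ⟨j - r, by omega⟩ : ℕ) + s := by
      intro j h1 h2
      simp only [hqdef]
      rw [dif_neg (by omega : ¬ j < r), dif_pos (by omega : j - r < r)]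
    have hq2s : ∀ j, j < 2 * r → q j < 2 * s := by
      intro j hj
      rcases Nat.lt_or_ge j r with h | h
      · rw [hql j h]; have := ιlt ⟨j, h⟩; omega
      · rw [hqr j h hj]; have := ιlt ⟨j - r, by omega⟩; omega
    have hqorig : ∀ j, j < 2 * r → Orig S (v (q j)) := by
      intro j hj
      rcases Nat.lt_or_ge j r with h | h
      · rw [hql j h]; exact ιorig _
      · rw [hqr j h hj]
        exact (htype _ (ιlt ⟨j - r, by omega⟩)).mp (ιorig _)
    have hqmono : ∀ j, j + 1 < 2 * r → q j < q (j + 1) := by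
      intro j hj
      rcases Nat.lt_or_ge (j + 1) r with h | h
      · rw [hql j (by omega), hql (j + 1) h]
        exact ιmono _ _ (by simp [Fin.lt_def])
      · rcases Nat.lt_or_ge j r with h2 | h2
        · -- j = r - 1, j + 1 = r
          rw [hql j h2, hqr (j + 1) h (by omega)]
          have := ιlt ⟨j, h2⟩; omega
        · rw [hqr j h2 (by omega), hqr (j + 1) h hj]
          have := ιmono ⟨j - r, by omega⟩ ⟨j + 1 - r, by omega⟩ (by simp [Fin.lt_def]; omega)
          omega
    have hqmono' : ∀ j j', j < j' → j' < 2 * r → q j < q j' := by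
      intro j j' hlt hlt2
      induction j' with
      | zero => omega
      | succ n ih =>
        rcases Nat.lt_or_ge j n with h | h
        · exact lt_trans (ih h (by omega)) (hqmono n (by omega))
        · have : j = n := by omega
          subst this
          exact hqmono j (by omega)
    have hqgap : ∀ j, j + 1 < 2 * r → ∀ p, q j < p → p < q (j + 1) → ¬ Orig S (v p) := by
      intro j hj p hp1 hp2 hporig
      rcases Nat.lt_or_ge (j + 1) r with h | h
      · -- within the first block
        rw [hql j (by omega)] at hp1
        rw [hql (j + 1) h] at hp2
        have hps : p < s := lt_trans hp2 (ιlt _)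
        obtain ⟨jj, hjj⟩ := ιsurj p ((hmemO1 p).mpr ⟨hps, hporig⟩)
        rw [← hjj] at hp1 hp2
        have l1 := ιrefl _ _ hp1
        have l2 := ιrefl _ _ hp2
        rw [Fin.lt_def] at l1 l2
        simp at l1 l2
        omega
      · rcases Nat.lt_or_ge j r with h2 | h2
        · -- crossing the middle : q j = ι (r-1), q (j+1) = ι 0 + s
          rw [hql j h2] at hp1
          rw [hqr (j + 1) h (by omega)] at hp2
          rcases Nat.lt_or_ge p s with hps | hps
          · obtain ⟨jj, hjj⟩ := ιsurj p ((hmemO1 p).mpr ⟨hps, hporig⟩)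
            rw [← hjj] at hp1
            have l1 := ιrefl _ _ hp1
            rw [Fin.lt_def] at l1
            simp at l1
            omega
          · have hlt0 : (ι ⟨j + 1 - r, by omega⟩ : ℕ) < s := ιlt _
            have hporig' : Orig S (v (p - s)) := by
              refine (htype (p - s) (by omega)).mpr ?_
              rwa [show p - s + s = p by omega]
            obtain ⟨jj, hjj⟩ := ιsurj (p - s) ((hmemO1 _).mpr ⟨by omega, hporig'⟩)
            have hle : (ι ⟨j + 1 - r, by omega⟩ : ℕ) ≤ (ι jj : ℕ) := by
              apply ιmono'
              rw [Fin.le_def]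
              simp
              omega
            omega
        · -- within the second block
          rw [hqr j h2 (by omega)] at hp1
          rw [hqr (j + 1) h hj] at hp2
          have hporig' : Orig S (v (p - s)) := by
            have hpls : p - s < s := by have := ιlt ⟨j + 1 - r, by omega⟩; omega
            refine (htype (p - s) hpls).mpr ?_
            rwa [show p - s + s = p by omega]
          have hpls : p - s < s := by have := ιlt ⟨j + 1 - r, by omega⟩; omega
          obtain ⟨jj, hjj⟩ := ιsurj (p - s) ((hmemO1 _).mpr ⟨hpls, hporig'⟩)
          have l1 : (ι ⟨j - r, by omega⟩ : ℕ) < (ι jj : ℕ) := by omega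
          have l2 : (ι jj : ℕ) < (ι ⟨j + 1 - r, by omega⟩ : ℕ) := by omega
          have m1 := ιrefl _ _ l1
          have m2 := ιrefl _ _ l2
          rw [Fin.lt_def] at m1 m2
          simp at m1 m2
          omega
    -- the projected sequence in V
    obtain ⟨ifst, hifst, hofst⟩ := hfirst
    set u : ℕ → V := fun j =>
      if h : Orig S (v (q j)) then h.choose else hofst.choose with hudef
    have hu : ∀ j, j < 2 * r → S.emb (u j) = v (q j) := by
      intro j hj
      have h := hqorig j hj
      simp only [hudef]
      rw [dif_pos h]
      exact h.choose_spec
    have hune : ∀ j, j < 2 * r → ∀ j', j' < 2 * r → j ≠ j' → u j ≠ u j' := by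
      intro j hj j' hj' hne heq
      have hq : q j ≠ q j' := by
        rcases Nat.lt_or_ge j j' with h | h
        · exact Nat.ne_of_lt (hqmono' j j' h hj')
        · exact (Nat.ne_of_lt (hqmono' j' j (by omega) hj)).symm
      exact hdis (q j) (hq2s j hj) (q j') (hq2s j' hj') hq
        (by rw [← hu j hj, ← hu j' hj', heq])
    exact hc r hr u hune
      (by
        intro j hj
        exact orig_run_adj S hadj (hqmono j hj) (hq2s (j + 1) hj) (hu j (by omega))
          (hu (j + 1) hj) (hune j (by omega) (j + 1) hj (by omega))
          (hqgap j hj))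
      (by
        intro j hj
        have e1 : q (j + r) = q j + s := by
          rw [hqr (j + r) (by omega) (by omega), hql j (by omega)]
          have : j + r - r = j := by omega
          simp only [this]
        have hqjs : q j < s := by rw [hql j (by omega)]; exact ιlt _
        have hcol := hrep (q j) hqjs
        rw [← e1] at hcol
        rw [← hu j (by omega), ← hu (j + r) (by omega)] at hcol
        exact col_eq_orig S hcol)
  · -- Case B : all vertices are division vertices, inside a single edge path
    push_neg at hA
    have hd0 : ¬ Orig S (v 0) := hA 0 (by omega)
    have hdE : ∀ i, i < 2 * s → ∀ hi : ¬ Orig S (v i), dEdge S (v i) hi = dEdge S (v 0) hd0 := by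
      intro i
      induction i with
      | zero => intro _ hi; rfl
      | succ n ih =>
        intro hlt hi
        have hn : ¬ Orig S (v n) := hA n (by omega)
        rw [← dEdge_adj_eq S hn hi (hadj n (by omega))]
        exact ih (by omega) hn
    set e := dEdge S (v 0) hd0 with hedef
    have he : e ∈ G.edgeSet := dEdge_mem S (v 0) hd0
    set t : ℕ → ℕ := fun i => if h : i < 2 * s then idxw S (v i) (hA i h) else 0 with htdef
    have ht : ∀ i (h : i < 2 * s), t i = idxw S (v i) (hA i h) := by
      intro i h
      simp only [htdef]
      rw [dif_pos h]
    have htw : ∀ i (h : i < 2 * s), 1 ≤ t i ∧ t i + 2 ≤ (CL S e he).length := by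
      intro i h
      rw [ht i h]
      exact idx_window S (hA i h) he (hdE i h _)
    have hstep : ∀ i, i + 1 < 2 * s → (t (i + 1) = t i + 1 ∨ t i = t (i + 1) + 1) := by
      intro i hi
      rw [ht i (by omega), ht (i + 1) hi]
      exact idx_step S (hA i (by omega)) (hA (i + 1) hi) (hadj i hi) he (hdE i (by omega) _)
    have htinj : ∀ i i', i < 2 * s → i' < 2 * s → t i = t i' → v i = v i' := by
      intro i i' hi hi' heq
      rw [ht i hi, ht i' hi'] at heq
      rw [idxw_eq S (v i) (hA i hi) he (hdE i hi _),
        idxw_eq S (v i') (hA i' hi') he (hdE i' hi' _)] at heq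
      exact lidx_inj (mem_CL_of_dEdge_eq S (hA i hi) he (hdE i hi _))
        (mem_CL_of_dEdge_eq S (hA i' hi') he (hdE i' hi' _)) heq
    have hcolw : ∀ i, i < s → word (t i) = word (t (i + s)) := by
      intro i hi
      rw [ht i (by omega), ht (i + s) (by omega)]
      exact col_eq_div S _ _ (hrep i hi)
    rcases hstep 0 (by omega) with hup | hdown
    · -- ascending
      have hup' : t 1 = t 0 + 1 := hup
      have hasc : ∀ i, i < 2 * s → t i = t 0 + i := by
        intro i
        induction i using Nat.strong_induction_on with
        | _ i IH =>
        intro hi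
        match i with
        | 0 => simp
        | 1 => exact hup'
        | (n + 2) =>
          have h1 := IH (n + 1) (by omega) (by omega)
          have h0 := IH n (by omega) (by omega)
          rcases hstep (n + 1) (by omega) with hcase | hcase
          · have hcase' : t (n + 2) = t (n + 1) + 1 := hcase
            omega
          · have hcase' : t (n + 1) = t (n + 2) + 1 := hcase
            exfalso
            have heq2 : t (n + 2) = t n := by omega
            have := htinj (n + 2) n (by omega) (by omega) heq2
            exact hdis (n + 2) (by omega) n (by omega) (by omega) this
      have h0w := htw 0 (by omega)
      have hlastw := htw (2 * s - 1) (by omega)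
      have hlasteq := hasc (2 * s - 1) (by omega)
      obtain ⟨i, his, hne⟩ := hword e he (t 0) s hs h0w.1 (by omega)
      apply hne
      have hcw := hcolw i his
      rw [hasc i (by omega), hasc (i + s) (by omega)] at hcw
      rw [show t 0 + i + s = t 0 + (i + s) by ring]
      exact hcw
    · -- descending
      have hdown' : t 0 = t 1 + 1 := hdown
      have hdesc : ∀ i, i < 2 * s → t i + i = t 0 := by
        intro i
        induction i using Nat.strong_induction_on with
        | _ i IH =>
        intro hi
        match i with
        | 0 => simp
        | 1 => omega
        | (n + 2) =>
          have h1 := IH (n + 1) (by omega) (by omega)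
          have h0 := IH n (by omega) (by omega)
          rcases hstep (n + 1) (by omega) with hcase | hcase
          · have hcase' : t (n + 2) = t (n + 1) + 1 := hcase
            exfalso
            have heq2 : t (n + 2) = t n := by omega
            have := htinj (n + 2) n (by omega) (by omega) heq2
            exact hdis (n + 2) (by omega) n (by omega) (by omega) this
          · have hcase' : t (n + 1) = t (n + 2) + 1 := hcase
            omega
      have h0w := htw 0 (by omega)
      have hlastw := htw (2 * s - 1) (by omega)
      have hlasteq := hdesc (2 * s - 1) (by omega)
      obtain ⟨i, his, hne⟩ := hword e he (t (2 * s - 1)) s hs hlastw.1 (by omega)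
      apply hne
      have hcw := hcolw (s - 1 - i) (by omega)
      have e1 : t (s - 1 - i) = t (2 * s - 1) + i + s := by
        have := hdesc (s - 1 - i) (by omega)
        omega
      have e2 : t (s - 1 - i + s) = t (2 * s - 1) + i := by
        have := hdesc (s - 1 - i + s) (by omega)
        omega
      rw [e1, e2] at hcw
      rw [show t (2 * s - 1) + i + s = t (2 * s - 1) + i + s by rfl]
      exact hcw.symm

end Stmt12Aux

namespace Stmt12Aux

open SimpleGraph

variable {V W : Type*} {G : SimpleGraph V} {H : SimpleGraph W}

lemma nonrep_of_injective {f : V → Fin n} (hf : Function.Injective f) :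
    NonRepColoring G f := by
  intro s hs v hdis _ hrepf
  exact hdis 0 (by omega) s (by omega) (by omega) (hf (by simpa using hrepf 0 hs))

lemma exists_nonrep [Fintype V] (G : SimpleGraph V) :
    ∃ c : V → Fin (piNum G), NonRepColoring G c := by
  have hmem : Fintype.card V ∈ {k : ℕ | ∃ f : V → Fin k, NonRepColoring G f} :=
    ⟨⇑(Fintype.equivFin V), nonrep_of_injective (Fintype.equivFin V).injective⟩
  exact Nat.sInf_mem (⟨_, hmem⟩ : Set.Nonempty _)

lemma piNum_le_of_word [Fintype V] [Fintype W] {G : SimpleGraph V} {H : SimpleGraph W}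
    (S : SubdivisionWitness G H) (m : ℕ) (word : ℕ → Fin m)
    (hword : ∀ (e : Sym2 V) (he : e ∈ G.edgeSet) (t s : ℕ), 0 < s → 1 ≤ t →
      t + 2 * s + 1 ≤ (CL S e he).length → ∃ i, i < s ∧ word (t + i) ≠ word (t + i + s)) :
    piNum H ≤ piNum G + m := by
  obtain ⟨c, hc⟩ := exists_nonrep G
  exact Nat.sInf_le ⟨col S c word, nonrep_col S c hc word hword⟩

end Stmt12Aux

open Stmt12Aux in
theorem stmt_12' {V W : Type*} [Fintype V] [Fintype W]
    (G : SimpleGraph V) (H : SimpleGraph W) :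
    (IsLESubdivision 1 G H → piNum H ≤ piNum G + 1) ∧
    (IsLESubdivision 2 G H → piNum H ≤ piNum G + 2) ∧
    (IsSubdivision G H → piNum H ≤ piNum G + 3) := by
  refine ⟨?_, ?_, ?_⟩
  · rintro ⟨S, hlen⟩
    refine piNum_le_of_word S 1 (fun _ => 0) ?_
    intro e he t s hs ht hb
    exfalso
    have h1 : (CL S e he).length = (cpath S e he).length + 1 := CL_length S e he
    have h2 : (cpath S e he).length ≤ 2 := hlen (cadj he)
    omega
  · rintro ⟨S, hlen⟩
    refine piNum_le_of_word S 2 (fun n => ⟨n % 2, by omega⟩) ?_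
    intro e he t s hs ht hb
    have h1 : (CL S e he).length = (cpath S e he).length + 1 := CL_length S e he
    have h2 : (cpath S e he).length ≤ 3 := hlen (cadj he)
    have ht1 : t = 1 := by omega
    have hs1 : s = 1 := by omega
    subst ht1; subst hs1
    exact ⟨0, by omega, by decide⟩
  · rintro ⟨S⟩
    refine piNum_le_of_word S 3 w3 ?_
    intro e he t s hs ht hb
    exact w3_squarefree t s hs

/-- For every graph `G`: (a) `π(H) ≤ π(G) + 1` for every `(≤1)`-subdivision
`H` of `G`; (b) `π(H) ≤ π(G) + 2` for every `(≤2)`-subdivision `H` of `G`;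
(c) `π(H) ≤ π(G) + 3` for every subdivision `H` of `G`. -/
theorem stmt_12 {V W : Type*} [Fintype V] [Fintype W]
    (G : SimpleGraph V) (H : SimpleGraph W) :
    (IsLESubdivision 1 G H → piNum H ≤ piNum G + 1) ∧
    (IsLESubdivision 2 G H → piNum H ≤ piNum G + 2) ∧
    (IsSubdivision G H → piNum H ≤ piNum G + 3) := by
  exact stmt_12' G H
end
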